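/- arXiv:1808.06975 — 4 statements merged into one kernel-verified Lean document; each statement's English description precedes it below -/
import Mathlib

section
/- Let g : (-∞,0) → U(n) be a family of unitary n×n matrices depending on a parameter s, and suppose there exists δ > 0 and c > 0 such that for all l ∈ [n] and all J ⊆ [n] with |J| = l and J ≠ [l] = {1,...,l}, the minor satisfies |Δ_{[l],J}(g(s))| ≤ c·e^{sδ} for all s < 0. Then there exists c' > 0 such that every off-diagonal matrix entry satisfies |g(s)_{i,j}| ≤ c'·e^{sδ} for all i ≠ j and all s < 0. -/
open scoped Matrix

open Finset in
private lemma aux_det_expand {l n : ℕ} (A : Matrix (Fin l) (Fin n) ℂ)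
    (C : Matrix (Fin n) (Fin l) ℂ) :
    (A * C).det = ∑ p : Fin l → Fin n, (∏ b, C (p b) b) * (A.submatrix id p).det := by
  have h1 : (A * C).det = ∑ p : Fin l → Fin n, ∑ σ : Equiv.Perm (Fin l),
      (Equiv.Perm.sign σ : ℂ) * ∏ b, A (σ b) (p b) * C (p b) b := by
    simp only [Matrix.det_apply', Matrix.mul_apply, prod_univ_sum, mul_sum,
      Fintype.piFinset_univ]
    rw [Finset.sum_comm]
  rw [h1]
  refine Finset.sum_congr rfl fun p _ => ?_
  rw [Matrix.det_apply', Finset.mul_sum]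
  refine Finset.sum_congr rfl fun σ _ => ?_
  simp only [Matrix.submatrix_apply, id_eq, prod_mul_distrib]
  ring

private lemma aux_entry_bound {n : ℕ} {g : Matrix (Fin n) (Fin n) ℂ}
    (hg : g ∈ Matrix.unitaryGroup (Fin n) ℂ) (a b : Fin n) : ‖g a b‖ ≤ 1 := by
  have h1 : g * star g = 1 := (Matrix.mem_unitaryGroup_iff).mp hg
  have h2 : (g * star g) a a = 1 := by rw [h1]; simp
  rw [Matrix.mul_apply] at h2
  have h3 : ∀ k, (g a k * (star g) k a) = (((‖g a k‖)^2 : ℝ) : ℂ) := by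
    intro k
    rw [Matrix.star_apply, RCLike.star_def, Complex.mul_conj, Complex.normSq_eq_norm_sq]
  rw [Finset.sum_congr rfl (fun k _ => h3 k)] at h2
  have h4 : ∑ k, (‖g a k‖)^2 = 1 := by exact_mod_cast h2
  have h5 : (‖g a b‖)^2 ≤ 1 := by
    rw [← h4]
    exact Finset.single_le_sum (f := fun k => (‖g a k‖)^2)
      (fun k _ => sq_nonneg _) (Finset.mem_univ b)
  nlinarith [norm_nonneg (g a b)]

private lemma aux_det_le {l : ℕ} (M : Matrix (Fin l) (Fin l) ℂ)
    (h : ∀ a b, ‖M a b‖ ≤ 1) : ‖M.det‖ ≤ Nat.factorial l := by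
  rw [Matrix.det_apply]
  calc ‖∑ σ : Equiv.Perm (Fin l), Equiv.Perm.sign σ • ∏ i, M (σ i) i‖
      ≤ ∑ σ : Equiv.Perm (Fin l), ‖Equiv.Perm.sign σ • ∏ i, M (σ i) i‖ := by
        apply norm_sum_le
    _ ≤ ∑ _σ : Equiv.Perm (Fin l), 1 := by
        refine Finset.sum_le_sum fun σ _ => ?_
        rw [Units.smul_def, zsmul_eq_mul, norm_mul]
        have h1 : ‖((Equiv.Perm.sign σ : ℤ) : ℂ)‖ = 1 := by
          rcases Int.units_eq_one_or (Equiv.Perm.sign σ) with h | h <;> simp [h]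
        rw [h1, one_mul, norm_prod]
        exact Finset.prod_le_one (fun a _ => norm_nonneg _) (fun a _ => h _ _)
    _ = (Fintype.card (Equiv.Perm (Fin l)) : ℝ) := by simp
    _ = Nat.factorial l := by rw [Fintype.card_perm]; simp

private lemma aux_no_descent {l n : ℕ} (p : Fin l → Fin n) (hp : Function.Injective p)
    (hle : ∀ b : Fin l, (p b : ℕ) ≤ (b : ℕ)) : ∀ b : Fin l, (p b : ℕ) = (b : ℕ) := by
  have key : ∀ m : ℕ, ∀ b : Fin l, (b : ℕ) = m → (p b : ℕ) = (b : ℕ) := by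
    intro m
    induction m using Nat.strong_induction_on with
    | _ m ih =>
      intro b hb
      by_contra hne
      have hlt : (p b : ℕ) < (b : ℕ) := lt_of_le_of_ne (hle b) hne
      have hbl : (p b : ℕ) < l := lt_trans hlt b.isLt
      have h1 : (p ⟨(p b : ℕ), hbl⟩ : ℕ) = ((⟨(p b : ℕ), hbl⟩ : Fin l) : ℕ) :=
        ih (p b : ℕ) (hb ▸ hlt) _ rfl
      have h2 : p ⟨(p b : ℕ), hbl⟩ = p b := Fin.ext h1
      have h3 := congrArg Fin.val (hp h2)
      simp at h3
      omega
  exact fun b => key (b : ℕ) b rfl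

open Finset in
private lemma aux_factor {l n : ℕ} (p : Fin l → Fin n) (hp : Function.Injective p) :
    ∃ (hJ : (Finset.image p Finset.univ).card = l) (σ : Equiv.Perm (Fin l)),
      ∀ b, p b = (Finset.image p Finset.univ).orderEmbOfFin hJ (σ b) := by
  set J := Finset.image p Finset.univ with hJdef
  have hJ : J.card = l := by
    rw [hJdef, Finset.card_image_of_injective _ hp, Finset.card_univ, Fintype.card_fin]
  refine ⟨hJ, ?_⟩
  have hmem : ∀ b, p b ∈ J := fun b => Finset.mem_image_of_mem p (Finset.mem_univ b)
  set q : Fin l → Fin l := fun b => (J.orderIsoOfFin hJ).symm ⟨p b, hmem b⟩ with hq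
  have hqinj : Function.Injective q :=
    (J.orderIsoOfFin hJ).symm.injective.comp
      (fun a b hab => hp (congrArg Subtype.val hab))
  have hbij := Finite.injective_iff_bijective.mp hqinj
  refine ⟨Equiv.ofBijective q hbij, fun b => ?_⟩
  show p b = J.orderEmbOfFin hJ (q b)
  have h2 : (J.orderIsoOfFin hJ) (q b) = ⟨p b, hmem b⟩ := by
    simp [hq]
  have h3 := congrArg Subtype.val h2
  rw [Finset.coe_orderIsoOfFin_apply] at h3
  exact h3.symm

private lemma aux_abs_perm {l : ℕ} (σ : Equiv.Perm (Fin l)) (M : Matrix (Fin l) (Fin l) ℂ) :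
    ‖(M.submatrix id ⇑σ).det‖ = ‖M.det‖ := by
  rw [Matrix.det_permute', norm_mul]
  rcases Int.units_eq_one_or (Equiv.Perm.sign σ) with h | h <;> rw [h] <;> simp

/-- The comparison matrix: rows `0..i-1` of `g`, with row `i` replaced by `e_j`. -/
private def Bmat {n : ℕ} (g : Matrix (Fin n) (Fin n) ℂ) (i j : Fin n) :
    Matrix (Fin ((i : ℕ) + 1)) (Fin n) ℂ :=
  fun b k => if (b : ℕ) = (i : ℕ) then (if k = j then 1 else 0)
    else g (Fin.castLE i.isLt b) k

private lemma aux_entry_eq {n : ℕ} {g : Matrix (Fin n) (Fin n) ℂ}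
    (hg : g ∈ Matrix.unitaryGroup (Fin n) ℂ) (i j : Fin n) :
    g i j = ∑ p : Fin ((i : ℕ) + 1) → Fin n,
      (∏ b, (starRingEnd ℂ) (Bmat g i j b (p b))) *
        (g.submatrix (Fin.castLE i.isLt) p).det := by
  have hstar : g * star g = 1 := Matrix.mem_unitaryGroup_iff.mp hg
  set A : Matrix (Fin ((i : ℕ) + 1)) (Fin n) ℂ := g.submatrix (Fin.castLE i.isLt) id with hA
  have key : A * (Bmat g i j)ᴴ =
      (1 : Matrix (Fin ((i : ℕ) + 1)) (Fin ((i : ℕ) + 1)) ℂ).updateCol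
        (Fin.last (i : ℕ)) (fun b => g (Fin.castLE i.isLt b) j) := by
    ext b b'
    rw [Matrix.mul_apply]
    by_cases hb' : b' = Fin.last (i : ℕ)
    · subst hb'
      rw [Matrix.updateCol_self]
      simp [hA, Bmat, Matrix.conjTranspose_apply, apply_ite (starRingEnd ℂ),
        mul_ite, Finset.sum_ite_eq']
    · rw [Matrix.updateCol_ne hb']
      have hb'i : (b' : ℕ) ≠ (i : ℕ) := by
        intro h; exact hb' (Fin.ext (by simpa using h))
      have h2 : ∑ k, A b k * (Bmat g i j)ᴴ k b'
          = (g * star g) (Fin.castLE i.isLt b) (Fin.castLE i.isLt b') := by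
        rw [Matrix.mul_apply]
        refine Finset.sum_congr rfl fun k _ => ?_
        simp [hA, Bmat, hb'i, Matrix.conjTranspose_apply, Matrix.star_apply]
      rw [h2, hstar]
      simp [Matrix.one_apply, Fin.castLE_inj]
  have hdet : (A * (Bmat g i j)ᴴ).det = g i j := by
    rw [key, ← Matrix.cramer_apply, Matrix.cramer_one]
    have : Fin.castLE i.isLt (Fin.last (i : ℕ)) = i := Fin.ext (by simp)
    simp [this]
  rw [← hdet, aux_det_expand]
  refine Finset.sum_congr rfl fun p _ => ?_
  have e1 : ∀ b : Fin ((i : ℕ) + 1), (Bmat g i j)ᴴ (p b) b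
      = (starRingEnd ℂ) (Bmat g i j b (p b)) :=
    fun b => by rw [Matrix.conjTranspose_apply]; rfl
  have e2 : A.submatrix id p = g.submatrix (Fin.castLE i.isLt) p := by
    rw [hA, Matrix.submatrix_submatrix]
    rfl
  rw [e2]
  rw [Finset.prod_congr rfl fun b _ => e1 b]

open Finset in
private lemma aux_upper {n : ℕ} (g : ℝ → Matrix (Fin n) (Fin n) ℂ)
    (hg : ∀ s < (0 : ℝ), g s ∈ Matrix.unitaryGroup (Fin n) ℂ)
    (δ c : ℝ) (hc : 0 < c)
    (hmin : ∀ (l : ℕ) (hl : l ≤ n) (J : Finset (Fin n)) (hJ : J.card = l),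
      J ≠ Finset.univ.filter (fun j : Fin n => (j : ℕ) < l) →
      ∀ s < (0 : ℝ),
        ‖((g s).submatrix (Fin.castLE hl) (J.orderEmbOfFin hJ)).det‖
          ≤ c * Real.exp (s * δ)) :
    ∀ s < (0 : ℝ), ∀ i j : Fin n, (i : ℕ) < (j : ℕ) →
      ‖g s i j‖ ≤ (((n : ℝ) + 1) ^ n * c) * Real.exp (s * δ) := by
  intro s hs i j hij
  have hexp : 0 < Real.exp (s * δ) := Real.exp_pos _
  have hterm : ∀ p : Fin ((i : ℕ) + 1) → Fin n,
      ‖(∏ b, (starRingEnd ℂ) (Bmat (g s) i j b (p b))) *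
        ((g s).submatrix (Fin.castLE i.isLt) p).det‖ ≤ c * Real.exp (s * δ) := by
    intro p
    by_cases hinj : Function.Injective p
    · by_cases hpl : p (Fin.last (i : ℕ)) = j
      · obtain ⟨hJ, σ, hfac⟩ := aux_factor p hinj
        have hjJ : j ∈ Finset.image p Finset.univ := by
          rw [← hpl]; exact Finset.mem_image_of_mem p (Finset.mem_univ _)
        have hne : Finset.image p Finset.univ ≠
            Finset.univ.filter (fun x : Fin n => (x : ℕ) < (i : ℕ) + 1) := by
          intro h
          rw [h, Finset.mem_filter] at hjJ
          omega
        have hdet := hmin ((i : ℕ) + 1) i.isLt _ hJ hne s hs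
        have heq : (g s).submatrix (Fin.castLE i.isLt) p =
            ((g s).submatrix (Fin.castLE i.isLt)
              ((Finset.image p Finset.univ).orderEmbOfFin hJ)).submatrix id ⇑σ := by
          ext a b
          simp [Matrix.submatrix_apply, hfac b]
        have habs : ‖((g s).submatrix (Fin.castLE i.isLt) p).det‖
            ≤ c * Real.exp (s * δ) := by
          rw [heq, aux_abs_perm]
          exact hdet
        have hprod : ‖∏ b, (starRingEnd ℂ) (Bmat (g s) i j b (p b))‖ ≤ 1 := by
          rw [norm_prod]
          refine Finset.prod_le_one (fun _ _ => norm_nonneg _) (fun b _ => ?_)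
          rw [Complex.norm_conj]
          by_cases hb : (b : ℕ) = (i : ℕ)
          · simp only [Bmat, hb, if_true]
            split <;> simp
          · simp only [Bmat, hb, if_false]
            exact aux_entry_bound (hg s hs) _ _
        rw [norm_mul]
        calc ‖∏ b, (starRingEnd ℂ) (Bmat (g s) i j b (p b))‖ *
              ‖((g s).submatrix (Fin.castLE i.isLt) p).det‖
            ≤ 1 * (c * Real.exp (s * δ)) := by
              exact mul_le_mul hprod habs (norm_nonneg _) one_pos.le
          _ = c * Real.exp (s * δ) := one_mul _
      · have hzero : (starRingEnd ℂ) (Bmat (g s) i j (Fin.last (i : ℕ))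
            (p (Fin.last (i : ℕ)))) = 0 := by
          simp [Bmat, hpl]
        rw [Finset.prod_eq_zero (Finset.mem_univ (Fin.last (i : ℕ))) hzero, zero_mul,
          norm_zero]
        positivity
    · obtain ⟨x, y, hxy, hne⟩ := Function.not_injective_iff.mp hinj
      have hdet0 : ((g s).submatrix (Fin.castLE i.isLt) p).det = 0 :=
        Matrix.det_zero_of_column_eq hne (fun k => by simp [Matrix.submatrix_apply, hxy])
      rw [hdet0, mul_zero, norm_zero]
      positivity
  rw [aux_entry_eq (hg s hs) i j]
  calc ‖∑ p : Fin ((i : ℕ) + 1) → Fin n,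
        (∏ b, (starRingEnd ℂ) (Bmat (g s) i j b (p b))) *
          ((g s).submatrix (Fin.castLE i.isLt) p).det‖
      ≤ ∑ p : Fin ((i : ℕ) + 1) → Fin n,
          ‖(∏ b, (starRingEnd ℂ) (Bmat (g s) i j b (p b))) *
            ((g s).submatrix (Fin.castLE i.isLt) p).det‖ := norm_sum_le _ _
    _ ≤ ∑ _p : Fin ((i : ℕ) + 1) → Fin n, c * Real.exp (s * δ) :=
        Finset.sum_le_sum (fun p _ => hterm p)
    _ = (Fintype.card (Fin ((i : ℕ) + 1) → Fin n) : ℝ) * (c * Real.exp (s * δ)) := by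
        rw [Finset.sum_const, Finset.card_univ, nsmul_eq_mul]
    _ ≤ (((n : ℝ) + 1) ^ n) * (c * Real.exp (s * δ)) := by
        refine mul_le_mul_of_nonneg_right ?_ (by positivity)
        rw [Fintype.card_fun, Fintype.card_fin, Fintype.card_fin]
        have h1 : n ^ ((i : ℕ) + 1) ≤ (n + 1) ^ n :=
          le_trans (Nat.pow_le_pow_left (Nat.le_succ n) _)
            (Nat.pow_le_pow_right (Nat.succ_pos n) i.isLt)
        calc ((n ^ ((i : ℕ) + 1) : ℕ) : ℝ) ≤ (((n + 1) ^ n : ℕ) : ℝ) := by exact_mod_cast h1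
          _ = ((n : ℝ) + 1) ^ n := by push_cast; ring
    _ = (((n : ℝ) + 1) ^ n * c) * Real.exp (s * δ) := by ring

open Finset in
private lemma aux_lower {n : ℕ} (g : ℝ → Matrix (Fin n) (Fin n) ℂ)
    (hg : ∀ s < (0 : ℝ), g s ∈ Matrix.unitaryGroup (Fin n) ℂ)
    (δ c c₁ : ℝ) (hc : 0 < c) (hc₁ : 0 < c₁)
    (hmin : ∀ (l : ℕ) (hl : l ≤ n) (J : Finset (Fin n)) (hJ : J.card = l),
      J ≠ Finset.univ.filter (fun j : Fin n => (j : ℕ) < l) →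
      ∀ s < (0 : ℝ),
        ‖((g s).submatrix (Fin.castLE hl) (J.orderEmbOfFin hJ)).det‖
          ≤ c * Real.exp (s * δ))
    (hup : ∀ s < (0 : ℝ), ∀ i j : Fin n, (i : ℕ) < (j : ℕ) →
      ‖g s i j‖ ≤ c₁ * Real.exp (s * δ)) :
    ∀ s < (0 : ℝ), ∀ i j : Fin n, (j : ℕ) < (i : ℕ) →
      ‖g s i j‖
        ≤ (((n : ℝ) + 1) ^ n * (c + (Nat.factorial n : ℝ) * c₁)) * Real.exp (s * δ) := by
  intro s hs i j hij
  have hexp : 0 < Real.exp (s * δ) := Real.exp_pos _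
  set K : ℝ := c + (Nat.factorial n : ℝ) * c₁ with hK
  have hKpos : 0 < K := by positivity
  have hterm : ∀ p : Fin ((i : ℕ) + 1) → Fin n,
      ‖(∏ b, (starRingEnd ℂ) (Bmat (g s) i j b (p b))) *
        ((g s).submatrix (Fin.castLE i.isLt) p).det‖ ≤ K * Real.exp (s * δ) := by
    intro p
    by_cases hinj : Function.Injective p
    · by_cases hpl : p (Fin.last (i : ℕ)) = j
      · by_cases hJne : Finset.image p Finset.univ =
            Finset.univ.filter (fun x : Fin n => (x : ℕ) < (i : ℕ) + 1)
        · -- leading subset: find an ascent and use the upper bound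
          have hasc : ∃ b : Fin ((i : ℕ) + 1), (b : ℕ) < (p b : ℕ) := by
            by_contra hno
            push_neg at hno
            have := aux_no_descent p hinj hno (Fin.last (i : ℕ))
            rw [hpl] at this
            simp at this
            omega
          obtain ⟨b0, hb0⟩ := hasc
          have hb0i : (b0 : ℕ) ≠ (i : ℕ) := by
            intro h
            have : b0 = Fin.last (i : ℕ) := Fin.ext (by simpa using h)
            rw [this, hpl] at hb0
            omega
          have hfac : ‖(starRingEnd ℂ) (Bmat (g s) i j b0 (p b0))‖
              ≤ c₁ * Real.exp (s * δ) := by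
            rw [Complex.norm_conj]
            simp only [Bmat, hb0i, if_false]
            exact hup s hs _ _ (by simpa using hb0)
          have hprod : ‖∏ b, (starRingEnd ℂ) (Bmat (g s) i j b (p b))‖
              ≤ c₁ * Real.exp (s * δ) := by
            rw [norm_prod]
            calc ∏ b, ‖(starRingEnd ℂ) (Bmat (g s) i j b (p b))‖
                ≤ ∏ b, (if b = b0 then c₁ * Real.exp (s * δ) else 1) := by
                  refine Finset.prod_le_prod (fun _ _ => norm_nonneg _) ?_
                  intro b _
                  by_cases hb : b = b0
                  · rw [hb, if_pos rfl]; exact hfac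
                  · rw [if_neg hb, Complex.norm_conj]
                    by_cases hbi : (b : ℕ) = (i : ℕ)
                    · simp only [Bmat, hbi, if_true]
                      split <;> simp
                    · simp only [Bmat, hbi, if_false]
                      exact aux_entry_bound (hg s hs) _ _
              _ = c₁ * Real.exp (s * δ) := by
                  rw [Finset.prod_ite_eq' Finset.univ b0 (fun _ => c₁ * Real.exp (s * δ))]
                  simp
          have hdet : ‖((g s).submatrix (Fin.castLE i.isLt) p).det‖
              ≤ (Nat.factorial n : ℝ) := by
            calc ‖((g s).submatrix (Fin.castLE i.isLt) p).det‖
                ≤ (Nat.factorial ((i : ℕ) + 1) : ℝ) :=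
                  aux_det_le _ (fun a b => aux_entry_bound (hg s hs) _ _)
              _ ≤ (Nat.factorial n : ℝ) := by
                  exact_mod_cast Nat.factorial_le i.isLt
          rw [norm_mul]
          calc ‖∏ b, (starRingEnd ℂ) (Bmat (g s) i j b (p b))‖ *
                ‖((g s).submatrix (Fin.castLE i.isLt) p).det‖
              ≤ (c₁ * Real.exp (s * δ)) * (Nat.factorial n : ℝ) := by
                refine mul_le_mul hprod hdet (norm_nonneg _) (by positivity)
            _ ≤ K * Real.exp (s * δ) := by
                rw [hK]
                nlinarith [mul_pos hc hexp]
        · -- non-leading subset: use the minor hypothesis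
          obtain ⟨hJ, σ, hfac⟩ := aux_factor p hinj
          have hdet := hmin ((i : ℕ) + 1) i.isLt _ hJ hJne s hs
          have heq : (g s).submatrix (Fin.castLE i.isLt) p =
              ((g s).submatrix (Fin.castLE i.isLt)
                ((Finset.image p Finset.univ).orderEmbOfFin hJ)).submatrix id ⇑σ := by
            ext a b
            simp [Matrix.submatrix_apply, hfac b]
          have habs : ‖((g s).submatrix (Fin.castLE i.isLt) p).det‖
              ≤ c * Real.exp (s * δ) := by
            rw [heq, aux_abs_perm]
            exact hdet
          have hprod : ‖∏ b, (starRingEnd ℂ) (Bmat (g s) i j b (p b))‖ ≤ 1 := by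
            rw [norm_prod]
            refine Finset.prod_le_one (fun _ _ => norm_nonneg _) (fun b _ => ?_)
            rw [Complex.norm_conj]
            by_cases hb : (b : ℕ) = (i : ℕ)
            · simp only [Bmat, hb, if_true]
              split <;> simp
            · simp only [Bmat, hb, if_false]
              exact aux_entry_bound (hg s hs) _ _
          rw [norm_mul]
          calc ‖∏ b, (starRingEnd ℂ) (Bmat (g s) i j b (p b))‖ *
                ‖((g s).submatrix (Fin.castLE i.isLt) p).det‖
              ≤ 1 * (c * Real.exp (s * δ)) :=
                mul_le_mul hprod habs (norm_nonneg _) one_pos.le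
            _ = c * Real.exp (s * δ) := one_mul _
            _ ≤ K * Real.exp (s * δ) := by
                rw [hK]
                nlinarith [mul_nonneg (mul_nonneg (Nat.cast_nonneg n.factorial) hc₁.le)
                  hexp.le]
      · have hzero : (starRingEnd ℂ) (Bmat (g s) i j (Fin.last (i : ℕ))
            (p (Fin.last (i : ℕ)))) = 0 := by
          simp [Bmat, hpl]
        rw [Finset.prod_eq_zero (Finset.mem_univ (Fin.last (i : ℕ))) hzero, zero_mul,
          norm_zero]
        positivity
    · obtain ⟨x, y, hxy, hne⟩ := Function.not_injective_iff.mp hinj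
      have hdet0 : ((g s).submatrix (Fin.castLE i.isLt) p).det = 0 :=
        Matrix.det_zero_of_column_eq hne (fun k => by simp [Matrix.submatrix_apply, hxy])
      rw [hdet0, mul_zero, norm_zero]
      positivity
  rw [aux_entry_eq (hg s hs) i j]
  calc ‖∑ p : Fin ((i : ℕ) + 1) → Fin n,
        (∏ b, (starRingEnd ℂ) (Bmat (g s) i j b (p b))) *
          ((g s).submatrix (Fin.castLE i.isLt) p).det‖
      ≤ ∑ p : Fin ((i : ℕ) + 1) → Fin n,
          ‖(∏ b, (starRingEnd ℂ) (Bmat (g s) i j b (p b))) *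
            ((g s).submatrix (Fin.castLE i.isLt) p).det‖ := norm_sum_le _ _
    _ ≤ ∑ _p : Fin ((i : ℕ) + 1) → Fin n, K * Real.exp (s * δ) :=
        Finset.sum_le_sum (fun p _ => hterm p)
    _ = (Fintype.card (Fin ((i : ℕ) + 1) → Fin n) : ℝ) * (K * Real.exp (s * δ)) := by
        rw [Finset.sum_const, Finset.card_univ, nsmul_eq_mul]
    _ ≤ (((n : ℝ) + 1) ^ n) * (K * Real.exp (s * δ)) := by
        refine mul_le_mul_of_nonneg_right ?_ (by positivity)
        rw [Fintype.card_fun, Fintype.card_fin, Fintype.card_fin]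
        have h1 : n ^ ((i : ℕ) + 1) ≤ (n + 1) ^ n :=
          le_trans (Nat.pow_le_pow_left (Nat.le_succ n) _)
            (Nat.pow_le_pow_right (Nat.succ_pos n) i.isLt)
        calc ((n ^ ((i : ℕ) + 1) : ℕ) : ℝ) ≤ (((n + 1) ^ n : ℕ) : ℝ) := by exact_mod_cast h1
          _ = ((n : ℝ) + 1) ^ n := by push_cast; ring
    _ = (((n : ℝ) + 1) ^ n * K) * Real.exp (s * δ) := by ring

/-- Off-diagonal decay: if all non-leading minors `Δ_{[l],J}` of a family of unitary
matrices are `O(e^{sδ})` as `s → -∞`, then all off-diagonal entries are `O(e^{sδ})`. -/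
theorem offdiag_decay (n : ℕ) (g : ℝ → Matrix (Fin n) (Fin n) ℂ)
    (hg : ∀ s < (0 : ℝ), g s ∈ Matrix.unitaryGroup (Fin n) ℂ)
    (δ c : ℝ) (hδ : 0 < δ) (hc : 0 < c)
    (hmin : ∀ (l : ℕ) (hl : l ≤ n) (J : Finset (Fin n)) (hJ : J.card = l),
      J ≠ Finset.univ.filter (fun j : Fin n => (j : ℕ) < l) →
      ∀ s < (0 : ℝ),
        ‖((g s).submatrix (Fin.castLE hl) (J.orderEmbOfFin hJ)).det‖
          ≤ c * Real.exp (s * δ)) :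
    ∃ c' > 0, ∀ (i j : Fin n), i ≠ j → ∀ s < (0 : ℝ),
      ‖g s i j‖ ≤ c' * Real.exp (s * δ) := by
  set c₁ : ℝ := ((n : ℝ) + 1) ^ n * c with hc₁def
  have hc₁ : 0 < c₁ := by positivity
  set c₂ : ℝ := ((n : ℝ) + 1) ^ n * (c + (Nat.factorial n : ℝ) * c₁) with hc₂def
  have hc₂ : 0 < c₂ := by positivity
  refine ⟨c₁ + c₂, by positivity, fun i j hij s hs => ?_⟩
  have hexp : 0 < Real.exp (s * δ) := Real.exp_pos _
  rcases lt_trichotomy (i : ℕ) (j : ℕ) with h | h | h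
  · have := aux_upper g hg δ c hc hmin s hs i j h
    nlinarith
  · exact absurd (Fin.ext h) hij
  · have := aux_lower g hg δ c c₁ hc hc₁ hmin
      (fun s hs i j hij => aux_upper g hg δ c hc hmin s hs i j hij) s hs i j h
    nlinarith
end

section
/- Let g ∈ GL(n,ℂ) and let i ∈ {2,...,n}, j > i. Set J = {1,...,i-1, j}. If the entries satisfy |g_{k,m}| ≤ ε for all k < i and m ≠ k, and all entries of g are bounded by M ≥ 1, and the minor |Δ_{[i],J}(g)| ≤ ε, then |g_{i,j} · Δ_{[i-1],[i-1]}(g)| ≤ C·ε for a constant C depending only on n and M, where Δ_{[i-1],[i-1]}(g) is the leading principal (i-1)×(i-1) minor (cofactor expansion of the minor Δ_{[i],J} along its last column). -/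
lemma my_abs_det_le {m : ℕ} (B : Matrix (Fin m) (Fin m) ℂ) (M : ℝ)
    (hB : ∀ k l, ‖B k l‖ ≤ M) :
    ‖B.det‖ ≤ m.factorial * M ^ m := by
  rw [Matrix.det_apply]
  calc ‖(∑ σ : Equiv.Perm (Fin m), Equiv.Perm.sign σ • ∏ k, B (σ k) k)‖
      ≤ ∑ σ : Equiv.Perm (Fin m), ‖(Equiv.Perm.sign σ • ∏ k, B (σ k) k)‖ :=
        norm_sum_le _ _
    _ ≤ ∑ _σ : Equiv.Perm (Fin m), M ^ m := by
        refine Finset.sum_le_sum fun σ _ => ?_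
        have h1 : |((Equiv.Perm.sign σ : ℤ) : ℝ)| = 1 := by
          rcases Int.units_eq_one_or (Equiv.Perm.sign σ) with h | h <;> rw [h] <;> norm_num
        rw [Units.smul_def, zsmul_eq_mul, norm_mul, Complex.norm_intCast, h1, one_mul, norm_prod]
        calc (∏ k, ‖B (σ k) k‖) ≤ ∏ _k : Fin m, M :=
              Finset.prod_le_prod (fun _ _ => norm_nonneg _) (fun k _ => hB _ _)
          _ = M ^ m := by simp
    _ = m.factorial * M ^ m := by
        rw [Finset.sum_const, Finset.card_univ, Fintype.card_perm, nsmul_eq_mul]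
        simp

lemma cofactor_last_bound {m : ℕ} (A : Matrix (Fin (m+1)) (Fin (m+1)) ℂ) (ε L : ℝ)
    (hcol : ∀ k : Fin (m+1), k ≠ Fin.last m → ‖A k (Fin.last m)‖ ≤ ε)
    (hminor : ∀ k : Fin (m+1),
      ‖(A.submatrix k.succAbove (Fin.last m).succAbove).det‖ ≤ L)
    (hdet : ‖A.det‖ ≤ ε) :
    ‖A (Fin.last m) (Fin.last m) *
      (A.submatrix (Fin.last m).succAbove (Fin.last m).succAbove).det‖ ≤ (1 + m * L) * ε := by
  have hε : 0 ≤ ε := le_trans (norm_nonneg _) hdet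
  set T : Fin (m+1) → ℂ := fun k => (-1 : ℂ) ^ ((k : ℕ) + (Fin.last m : ℕ)) * A k (Fin.last m) *
    (A.submatrix k.succAbove (Fin.last m).succAbove).det with hT
  have hdet' : A.det = ∑ k, T k := Matrix.det_succ_column A (Fin.last m)
  have hTlast : T (Fin.last m) = A (Fin.last m) (Fin.last m) *
      (A.submatrix (Fin.last m).succAbove (Fin.last m).succAbove).det := by
    simp only [hT, Fin.val_last]
    rw [show m + m = 2 * m from (two_mul m).symm, pow_mul]
    norm_num
  have key : A (Fin.last m) (Fin.last m) *
      (A.submatrix (Fin.last m).succAbove (Fin.last m).succAbove).det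
      = A.det - ∑ k ∈ Finset.univ.erase (Fin.last m), T k := by
    rw [hdet', ← Finset.add_sum_erase Finset.univ T (Finset.mem_univ (Fin.last m)), ← hTlast]
    ring
  rw [key]
  calc ‖A.det - ∑ k ∈ Finset.univ.erase (Fin.last m), T k‖
      ≤ ‖A.det‖ + ‖∑ k ∈ Finset.univ.erase (Fin.last m), T k‖ :=
        norm_sub_le _ _
    _ ≤ ε + ∑ k ∈ Finset.univ.erase (Fin.last m), ‖T k‖ :=
        add_le_add hdet (norm_sum_le _ _)
    _ ≤ ε + ∑ _k ∈ Finset.univ.erase (Fin.last m), ε * L := by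
        refine add_le_add le_rfl (Finset.sum_le_sum fun k hk => ?_)
        have hk' : k ≠ Fin.last m := (Finset.mem_erase.mp hk).1
        have : ‖T k‖ = ‖A k (Fin.last m)‖ *
            ‖(A.submatrix k.succAbove (Fin.last m).succAbove).det‖ := by
          simp [hT, map_mul]
        rw [this]
        exact mul_le_mul (hcol k hk') (hminor k) (norm_nonneg _) hε
    _ = (1 + m * L) * ε := by
        rw [Finset.sum_const, Finset.card_erase_of_mem (Finset.mem_univ _)]
        simp [nsmul_eq_mul]
        ring

/-- Cofactor-expansion bound: smallness of entries above the diagonal in the first `i-1`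
rows together with smallness of the minor `Δ_{[i],J}`, `J = {1,…,i-1,j}`, forces
`|g_{i,j} · Δ_{[i-1],[i-1]}(g)|` to be small, with a constant depending only on `n, M`. -/
theorem minor_cofactor_bound (n : ℕ) (M : ℝ) (hM : 1 ≤ M) :
    ∃ C > 0, ∀ (g : Matrix (Fin n) (Fin n) ℂ) (ε : ℝ), 0 ≤ ε →
      ∀ (i j : Fin n), 1 ≤ (i : ℕ) → i < j →
      ∀ (hJ : ((Finset.univ.filter (fun m : Fin n => (m : ℕ) < (i : ℕ))) ∪ {j}).card
          = (i : ℕ) + 1),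
        (∀ k m : Fin n, k < i → m ≠ k → ‖g k m‖ ≤ ε) →
        (∀ k m : Fin n, ‖g k m‖ ≤ M) →
        ‖(g.submatrix (Fin.castLE i.isLt)
              (((Finset.univ.filter (fun m : Fin n => (m : ℕ) < (i : ℕ))) ∪ {j}).orderEmbOfFin
                hJ)).det‖ ≤ ε →
        ‖g i j *
            (g.submatrix (Fin.castLE i.isLt.le) (Fin.castLE i.isLt.le)).det‖ ≤ C * ε := by
  have hM0 : (0:ℝ) ≤ M := le_trans zero_le_one hM
  refine ⟨1 + n * (n.factorial * M ^ n), by positivity, ?_⟩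
  intro g ε hε i j hi hij hJ hsmall hbound hΔ
  set J : Finset (Fin n) :=
    (Finset.univ.filter (fun m : Fin n => (m : ℕ) < (i : ℕ))) ∪ {j} with hJdef
  set f : Fin ((i:ℕ)+1) → Fin n :=
    fun k => if h : (k : ℕ) < (i : ℕ) then ⟨k, h.trans i.isLt⟩ else j with hf
  have hfs : ∀ x, f x ∈ J := by
    intro x
    simp only [hf]
    split_ifs with h
    · exact Finset.mem_union_left _ (Finset.mem_filter.mpr ⟨Finset.mem_univ _, h⟩)
    · exact Finset.mem_union_right _ (by simp)
  have hmono : StrictMono f := by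
    intro a b hab
    have hab' : (a : ℕ) < (b : ℕ) := hab
    have hij' : (i : ℕ) < (j : ℕ) := hij
    simp only [hf]
    split_ifs with ha hb hb
    · exact hab'
    · exact Fin.mk_lt_of_lt_val (lt_trans ha hij')
    · omega
    · have := a.isLt; have := b.isLt; omega
  have hemb : f = J.orderEmbOfFin hJ := Finset.orderEmbOfFin_unique hJ hfs hmono
  set A : Matrix (Fin ((i:ℕ)+1)) (Fin ((i:ℕ)+1)) ℂ :=
    g.submatrix (Fin.castLE i.isLt) (J.orderEmbOfFin hJ) with hA
  have hlastcol : ∀ k : Fin ((i:ℕ)+1), A k (Fin.last (i:ℕ)) = g (Fin.castLE i.isLt k) j := by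
    intro k
    simp only [hA, Matrix.submatrix_apply, ← hemb, hf]
    rw [dif_neg (by simp)]
  have hminorlast : A.submatrix (Fin.last (i:ℕ)).succAbove (Fin.last (i:ℕ)).succAbove
      = g.submatrix (Fin.castLE i.isLt.le) (Fin.castLE i.isLt.le) := by
    ext k k'
    simp only [hA, Matrix.submatrix_apply, Fin.succAbove_last, ← hemb, hf]
    rw [dif_pos (by simpa using k'.isLt)]
    rfl
  have hlast : A (Fin.last (i:ℕ)) (Fin.last (i:ℕ)) = g i j := by
    have hcl : Fin.castLE i.isLt (Fin.last (i:ℕ)) = i := Fin.ext rfl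
    rw [hlastcol, hcl]
  have h1 := cofactor_last_bound A ε (n.factorial * M ^ n) ?_ ?_ hΔ
  · rw [hlast, hminorlast] at h1
    refine h1.trans ?_
    have hL0 : (0:ℝ) ≤ ↑n.factorial * M ^ n := by positivity
    refine mul_le_mul_of_nonneg_right ?_ hε
    have : ((i:ℕ) : ℝ) ≤ (n : ℝ) := by exact_mod_cast i.isLt.le
    nlinarith
  · -- small entries in the last column
    intro k hk
    rw [hlastcol]
    have hklt : (k : ℕ) < (i : ℕ) := by
      have := k.isLt
      have : (k:ℕ) ≠ (i:ℕ) := fun h => hk (Fin.ext h)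
      omega
    refine hsmall _ _ hklt ?_
    have : (j : ℕ) ≠ (k : ℕ) := by
      have hij' : (i : ℕ) < (j : ℕ) := hij
      omega
    exact fun h => this (congrArg Fin.val h)
  · -- minors bounded
    intro k
    rw [Matrix.submatrix_submatrix]
    calc ‖(g.submatrix _ _).det‖ ≤ (i:ℕ).factorial * M ^ (i:ℕ) :=
          my_abs_det_le _ M (fun _ _ => hbound _ _)
      _ ≤ n.factorial * M ^ n := by
          have h1 : (((i:ℕ).factorial : ℝ)) ≤ (n.factorial : ℝ) := by
            exact_mod_cast Nat.factorial_le i.isLt.le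
          have h2 : M ^ (i:ℕ) ≤ M ^ n := pow_le_pow_right₀ hM i.isLt.le
          exact mul_le_mul h1 h2 (by positivity) (by positivity)
end

section
/- Volume concentration for the SU(2) family: fix ξ > 0 and z₀ ∈ (-1,1). Then the integral ∫₀^{2π}∫_{-1}^{z₀} sinh(2sξ)/(2s(cosh(2sξ)+z·sinh(2sξ))) dz dφ tends to 0 as s → -∞. Equivalently, for every ε > 0 there is s₀ < 0 such that for all s ≤ s₀ the mass of the region {z ≤ z₀} is less than ε, i.e., the volume concentrates near the pole z = 1. -/
open Real Filter

private lemma su2_denom_lb {s ξ z₀ z : ℝ} (hs : s < 0) (hξ : 0 < ξ) (hz₂ : z₀ < 1)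
    (hz : z ≤ z₀) :
    (1 - z₀) * (-Real.sinh (2 * s * ξ)) ≤ Real.cosh (2 * s * ξ) + z * Real.sinh (2 * s * ξ) := by
  have ht : 2 * s * ξ < 0 := by nlinarith
  have hsh : Real.sinh (2 * s * ξ) < 0 := by
    have := Real.sinh_pos_iff (x := -(2 * s * ξ))
    rw [Real.sinh_neg] at this
    nlinarith [this.2 (by linarith : 0 < -(2 * s * ξ))]
  have hexp : 0 < Real.cosh (2 * s * ξ) + Real.sinh (2 * s * ξ) := by
    rw [Real.cosh_add_sinh]; exact Real.exp_pos _
  nlinarith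

/-- Volume concentration for the SU(2) family: for fixed `ξ > 0` and `z₀ ∈ (-1,1)`, the
symplectic volume of the region `{z ≤ z₀}` tends to `0` as `s → -∞`. -/
theorem su2_volume_concentration (ξ z₀ : ℝ) (hξ : 0 < ξ) (hz₀ : z₀ ∈ Set.Ioo (-1 : ℝ) 1) :
    Tendsto (fun s : ℝ =>
        ∫ _φ in (0:ℝ)..(2 * π), ∫ z in (-1:ℝ)..z₀,
          Real.sinh (2 * s * ξ) / (2 * s * (Real.cosh (2 * s * ξ) + z * Real.sinh (2 * s * ξ))))
      atBot (nhds 0) := by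
  obtain ⟨hz₁, hz₂⟩ := hz₀
  set F : ℝ → ℝ := fun s =>
      ∫ _φ in (0:ℝ)..(2 * π), ∫ z in (-1:ℝ)..z₀,
        Real.sinh (2 * s * ξ) / (2 * s * (Real.cosh (2 * s * ξ) + z * Real.sinh (2 * s * ξ)))
    with hF
  -- upper bound function
  have hC : 0 < 2 * π * (z₀ + 1) / (2 * (1 - z₀)) := by
    have := Real.pi_pos; apply div_pos <;> nlinarith
  set C : ℝ := 2 * π * (z₀ + 1) / (2 * (1 - z₀)) with hCdef
  have hUtend : Tendsto (fun s : ℝ => C * (-s)⁻¹) atBot (nhds 0) := by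
    have h1 : Tendsto (fun s : ℝ => (-s)⁻¹) atBot (nhds 0) :=
      (tendsto_inv_atTop_zero).comp tendsto_neg_atBot_atTop
    simpa using h1.const_mul C
  refine tendsto_of_tendsto_of_tendsto_of_le_of_le' tendsto_const_nhds hUtend ?_ ?_
  · -- eventually 0 ≤ F s
    filter_upwards [eventually_lt_atBot (0:ℝ)] with s hs
    have hinner : (0:ℝ) ≤ ∫ z in (-1:ℝ)..z₀,
        Real.sinh (2 * s * ξ) / (2 * s * (Real.cosh (2 * s * ξ) + z * Real.sinh (2 * s * ξ))) := by
      apply intervalIntegral.integral_nonneg (by linarith)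
      intro z hz
      have hD := su2_denom_lb hs hξ hz₂ hz.2
      have hDpos : 0 < Real.cosh (2 * s * ξ) + z * Real.sinh (2 * s * ξ) := by
        have hsh : Real.sinh (2 * s * ξ) < 0 := by
          have := (Real.sinh_pos_iff (x := -(2 * s * ξ))).mpr (by nlinarith)
          rw [Real.sinh_neg] at this; linarith
        nlinarith
      have hsh : Real.sinh (2 * s * ξ) < 0 := by
        have := (Real.sinh_pos_iff (x := -(2 * s * ξ))).mpr (by nlinarith)
        rw [Real.sinh_neg] at this; linarith
      have : 2 * s * (Real.cosh (2 * s * ξ) + z * Real.sinh (2 * s * ξ)) < 0 := by nlinarith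
      exact le_of_lt (div_pos_of_neg_of_neg hsh this)
    rw [hF]
    simp only [intervalIntegral.integral_const, smul_eq_mul]
    have := Real.pi_pos
    nlinarith [hinner]
  · -- eventually F s ≤ C * (-s)⁻¹
    filter_upwards [eventually_lt_atBot (0:ℝ)] with s hs
    have hsh : Real.sinh (2 * s * ξ) < 0 := by
      have := (Real.sinh_pos_iff (x := -(2 * s * ξ))).mpr (by nlinarith)
      rw [Real.sinh_neg] at this; linarith
    -- pointwise bound on [-1, z₀]
    have hbound : ∀ z ∈ Set.Icc (-1:ℝ) z₀,
        Real.sinh (2 * s * ξ) / (2 * s * (Real.cosh (2 * s * ξ) + z * Real.sinh (2 * s * ξ)))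
          ≤ 1 / ((-2 * s) * (1 - z₀)) := by
      intro z hz
      have hD := su2_denom_lb hs hξ hz₂ hz.2
      have hDpos : 0 < Real.cosh (2 * s * ξ) + z * Real.sinh (2 * s * ξ) := by nlinarith
      have hden1 : 0 < (-2 * s) * (Real.cosh (2 * s * ξ) + z * Real.sinh (2 * s * ξ)) := by
        nlinarith
      have hden2 : 0 < (-2 * s) * (1 - z₀) := by nlinarith
      have hrw : Real.sinh (2 * s * ξ) / (2 * s * (Real.cosh (2 * s * ξ) + z * Real.sinh (2 * s * ξ)))
          = (-Real.sinh (2 * s * ξ)) / ((-2 * s) * (Real.cosh (2 * s * ξ) + z * Real.sinh (2 * s * ξ))) := by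
        rw [div_eq_div_iff (by nlinarith) (by nlinarith)]
        ring
      rw [hrw, div_le_div_iff₀ hden1 hden2]
      nlinarith
    -- continuity / integrability of the integrand
    have hcont : ContinuousOn (fun z =>
        Real.sinh (2 * s * ξ) / (2 * s * (Real.cosh (2 * s * ξ) + z * Real.sinh (2 * s * ξ))))
        (Set.Icc (-1:ℝ) z₀) := by
      apply ContinuousOn.div continuousOn_const
      · fun_prop
      · intro z hz
        have hD := su2_denom_lb hs hξ hz₂ hz.2
        have hDpos : 0 < Real.cosh (2 * s * ξ) + z * Real.sinh (2 * s * ξ) := by nlinarith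
        nlinarith
    have hint : IntervalIntegrable (fun z =>
        Real.sinh (2 * s * ξ) / (2 * s * (Real.cosh (2 * s * ξ) + z * Real.sinh (2 * s * ξ))))
        MeasureTheory.volume (-1) z₀ := by
      apply hcont.intervalIntegrable_of_Icc (by linarith)
    have hinner_le : (∫ z in (-1:ℝ)..z₀,
        Real.sinh (2 * s * ξ) / (2 * s * (Real.cosh (2 * s * ξ) + z * Real.sinh (2 * s * ξ))))
          ≤ (z₀ + 1) * (1 / ((-2 * s) * (1 - z₀))) := by
      have h := intervalIntegral.integral_mono_on (by linarith : (-1:ℝ) ≤ z₀) hint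
        intervalIntegrable_const hbound
      rw [intervalIntegral.integral_const, smul_eq_mul] at h
      calc _ ≤ (z₀ - (-1)) * (1 / ((-2 * s) * (1 - z₀))) := h
        _ = (z₀ + 1) * (1 / ((-2 * s) * (1 - z₀))) := by ring
    rw [hF]
    simp only [intervalIntegral.integral_const, smul_eq_mul, sub_zero]
    have hπ := Real.pi_pos
    have : 2 * π * ((z₀ + 1) * (1 / ((-2 * s) * (1 - z₀)))) = C * (-s)⁻¹ := by
      rw [hCdef]
      field_simp
    calc 2 * π * (∫ z in (-1:ℝ)..z₀,
          Real.sinh (2 * s * ξ) / (2 * s * (Real.cosh (2 * s * ξ) + z * Real.sinh (2 * s * ξ))))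
        ≤ 2 * π * ((z₀ + 1) * (1 / ((-2 * s) * (1 - z₀)))) := by nlinarith [hinner_le]
      _ = C * (-s)⁻¹ := this
end

section
/- Partial derivative estimate (Lemma 3.1 structure): with f(x,s) = x_1 + (1/(2s))·log(1 + Σ_j c_j e^{2s L_j(x)}) as above and L_j(x) ≥ δ on an open set Ω, the gradient satisfies ∂f/∂x_1 = 1 + O(e^{2sδ}) and ∂f/∂x_k = O(e^{2sδ}) for k ≥ 2, uniformly on Ω as s → -∞. Explicitly: |∇f(x,s) - e_1| ≤ C·e^{2sδ} for all x ∈ Ω and s ≤ s₀. -/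
set_option maxHeartbeats 2000000


/-- Partial derivative estimate (Lemma 3.1 structure): for
`f(x,s) = x₁ + (1/(2s))·log(1 + Σ_j c_j e^{2s L_j(x)})` with linear `L_j ≥ δ` on an open
set `Ω`, one has `‖∇f(x,s) - e₁‖ ≤ C·e^{2sδ}` (as covectors: the derivative is close to
the first coordinate projection) uniformly on `Ω` as `s → -∞`. -/
theorem partial_derivative_estimate (d N : ℕ) (hd : 0 < d)
    (L : Fin N → (Fin d → ℝ) →ₗ[ℝ] ℝ) (c : Fin N → ℝ)
    (Ω : Set (Fin d → ℝ)) (hΩ : IsOpen Ω) (δ : ℝ) (hδ : 0 < δ)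
    (hL : ∀ x ∈ Ω, ∀ j, δ ≤ L j x)
    (hpos : ∀ x ∈ Ω, ∀ s < (0:ℝ), 0 < 1 + ∑ j, c j * Real.exp (2 * s * L j x)) :
    ∃ C > 0, ∃ s₀ < (0:ℝ), ∀ s ≤ s₀, ∀ x ∈ Ω,
      ‖fderiv ℝ (fun y : Fin d → ℝ =>
            y ⟨0, hd⟩ + (1 / (2 * s)) * Real.log (1 + ∑ j, c j * Real.exp (2 * s * L j y))) x
          - ContinuousLinearMap.proj (R := ℝ) (φ := fun _ : Fin d => ℝ) ⟨0, hd⟩‖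
        ≤ C * Real.exp (2 * s * δ) := by
  classical
  set Lc : Fin N → (Fin d → ℝ) →L[ℝ] ℝ := fun j => (L j).toContinuousLinearMap with hLc
  set B : ℝ := ∑ j, |c j| with hB
  set M : ℝ := ∑ j, |c j| * ‖Lc j‖ with hM
  have hB0 : 0 ≤ B := Finset.sum_nonneg fun j _ => abs_nonneg _
  have hM0 : 0 ≤ M := Finset.sum_nonneg fun j _ => mul_nonneg (abs_nonneg _) (norm_nonneg _)
  set s₀ : ℝ := Real.log (1 / (2 * (B + 1))) / (2 * δ) with hs₀def
  have h2B : (1:ℝ) / (2 * (B + 1)) < 1 := by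
    rw [div_lt_one (by positivity)]; linarith
  have hs₀neg : s₀ < 0 :=
    div_neg_of_neg_of_pos (Real.log_neg (by positivity) h2B) (by positivity)
  have hexp₀ : Real.exp (2 * s₀ * δ) = 1 / (2 * (B + 1)) := by
    rw [hs₀def,
      show 2 * (Real.log (1 / (2 * (B + 1))) / (2 * δ)) * δ
        = Real.log (1 / (2 * (B + 1))) by field_simp]
    exact Real.exp_log (by positivity)
  refine ⟨2 * M + 1, by positivity, s₀, hs₀neg, ?_⟩
  intro s hs x hx
  have hs0 : s < 0 := lt_of_le_of_lt hs hs₀neg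
  have hsne : s ≠ 0 := hs0.ne
  have hexps : Real.exp (2 * s * δ) ≤ 1 / (2 * (B + 1)) := by
    rw [← hexp₀]
    exact Real.exp_le_exp.2 (by nlinarith)
  have hj : ∀ j, Real.exp (2 * s * L j x) ≤ Real.exp (2 * s * δ) := fun j =>
    Real.exp_le_exp.2 (by nlinarith [hL x hx j])
  set g : (Fin d → ℝ) → ℝ := fun y => 1 + ∑ j, c j * Real.exp (2 * s * L j y) with hg
  have hgx : 0 < g x := hpos x hx s hs0
  have hsum_abs : |∑ j, c j * Real.exp (2 * s * L j x)| ≤ B * Real.exp (2 * s * δ) := by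
    calc |∑ j, c j * Real.exp (2 * s * L j x)|
        ≤ ∑ j, |c j * Real.exp (2 * s * L j x)| := Finset.abs_sum_le_sum_abs _ _
      _ ≤ ∑ j, |c j| * Real.exp (2 * s * δ) := Finset.sum_le_sum fun j _ => by
          rw [abs_mul, abs_of_pos (Real.exp_pos _)]
          exact mul_le_mul_of_nonneg_left (hj j) (abs_nonneg _)
      _ = B * Real.exp (2 * s * δ) := by rw [hB, Finset.sum_mul]
  have hBexp : B * Real.exp (2 * s * δ) ≤ 1 / 2 := by
    have h1 : B * Real.exp (2 * s * δ) ≤ B * (1 / (2 * (B + 1))) :=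
      mul_le_mul_of_nonneg_left hexps hB0
    have h2 : B * (1 / (2 * (B + 1))) ≤ 1 / 2 := by
      rw [mul_one_div, div_le_div_iff₀ (by positivity) (by norm_num)]
      linarith
    linarith
  have hghalf : (1:ℝ) / 2 ≤ g x := by
    have := (abs_le.1 hsum_abs).1
    simp only [hg]
    linarith
  -- derivative computation
  have hterm : ∀ j, HasFDerivAt (fun y => c j * Real.exp (2 * s * L j y))
      (c j • (Real.exp (2 * s * L j x) • ((2 * s) • Lc j))) x := fun j =>
    ((((Lc j).hasFDerivAt (x := x)).const_mul (2 * s)).exp).const_mul (c j)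
  have hG : HasFDerivAt (fun y => ∑ j, c j * Real.exp (2 * s * L j y))
      (∑ j, c j • (Real.exp (2 * s * L j x) • ((2 * s) • Lc j))) x :=
    HasFDerivAt.fun_sum fun j _ => hterm j
  have hg' : HasFDerivAt g (∑ j, c j • (Real.exp (2 * s * L j x) • ((2 * s) • Lc j))) x :=
    hG.const_add 1
  have hlog := (hg'.log hgx.ne').const_mul (1 / (2 * s))
  have hF : HasFDerivAt (fun y : Fin d → ℝ =>
      y ⟨0, hd⟩ + (1 / (2 * s)) * Real.log (1 + ∑ j, c j * Real.exp (2 * s * L j y)))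
      (ContinuousLinearMap.proj (R := ℝ) (φ := fun _ : Fin d => ℝ) ⟨0, hd⟩
        + (1 / (2 * s)) • ((g x)⁻¹ • ∑ j, c j • (Real.exp (2 * s * L j x) • ((2 * s) • Lc j)))) x :=
    ((ContinuousLinearMap.proj (R := ℝ) (φ := fun _ : Fin d => ℝ) ⟨0, hd⟩).hasFDerivAt).add hlog
  rw [hF.fderiv, add_sub_cancel_left]
  set D : (Fin d → ℝ) →L[ℝ] ℝ := ∑ j, c j • (Real.exp (2 * s * L j x) • ((2 * s) • Lc j)) with hD
  have hDnorm : ‖D‖ ≤ |2 * s| * (Real.exp (2 * s * δ) * M) := by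
    calc ‖D‖ ≤ ∑ j, ‖c j • (Real.exp (2 * s * L j x) • ((2 * s) • Lc j))‖ :=
        norm_sum_le _ _
      _ ≤ ∑ j, |2 * s| * (Real.exp (2 * s * δ) * (|c j| * ‖Lc j‖)) := by
          refine Finset.sum_le_sum fun j _ => ?_
          rw [norm_smul (c j) (Real.exp (2 * s * L j x) • ((2 * s) • Lc j)),
            norm_smul (Real.exp (2 * s * L j x)) ((2 * s) • Lc j),
            norm_smul (2 * s) (Lc j), Real.norm_eq_abs, Real.norm_eq_abs,
            Real.norm_eq_abs, abs_of_pos (Real.exp_pos _)]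
          have h1 : Real.exp (2 * s * L j x) ≤ Real.exp (2 * s * δ) := hj j
          nlinarith [mul_le_mul_of_nonneg_left h1
            (mul_nonneg (mul_nonneg (abs_nonneg (c j)) (abs_nonneg (2 * s)))
              (norm_nonneg (Lc j)))]
      _ = |2 * s| * (Real.exp (2 * s * δ) * M) := by
          rw [hM, Finset.mul_sum, Finset.mul_sum]
  have habs : |1 / (2 * s)| * |2 * s| = 1 := by
    rw [← abs_mul]
    rw [div_mul_cancel₀ 1 (by simpa using hsne)]
    simp
  have hginv : (g x)⁻¹ ≤ 2 := by
    rw [inv_le_comm₀ hgx (by norm_num)]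
    linarith
  have hginv0 : 0 ≤ (g x)⁻¹ := inv_nonneg.2 hgx.le
  calc ‖(1 / (2 * s)) • ((g x)⁻¹ • D)‖
      = |1 / (2 * s)| * ((g x)⁻¹ * ‖D‖) := by
        rw [norm_smul (1 / (2 * s)) ((g x)⁻¹ • D), norm_smul (g x)⁻¹ D,
          Real.norm_eq_abs, Real.norm_eq_abs, abs_of_nonneg hginv0]
    _ ≤ |1 / (2 * s)| * ((g x)⁻¹ * (|2 * s| * (Real.exp (2 * s * δ) * M))) := by
        have := abs_nonneg (1 / (2 * s))
        nlinarith [mul_le_mul_of_nonneg_left hDnorm hginv0]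
    _ = (|1 / (2 * s)| * |2 * s|) * ((g x)⁻¹ * (Real.exp (2 * s * δ) * M)) := by ring
    _ = (g x)⁻¹ * (Real.exp (2 * s * δ) * M) := by rw [habs, one_mul]
    _ ≤ (2 * M + 1) * Real.exp (2 * s * δ) := by
        nlinarith [Real.exp_pos (2 * s * δ), mul_le_mul_of_nonneg_right hginv
          (mul_nonneg (Real.exp_pos (2*s*δ)).le hM0)]
end
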